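/- Let a < b, let V be a finite-dimensional subspace of C¹([a,b];ℝ) containing the constant function 1, and let V₀ be a finite-dimensional subspace of C¹([a,b];ℝ) all of whose elements vanish at a and b. Denote by P and P₀ the L²(a,b)-orthogonal projections onto V and V₀ respectively. Let η̃ : [0,T] → V and ũ : [0,T] → V₀ be continuously differentiable curves satisfying, for every t ∈ [0,T]: (i) for all χ ∈ V, ∫_a^b η̃_t χ dx + (1/6) ∫_a^b (d/dt P₀[η̃_x]) χ' dx = ∫_a^b P₀[(1+η̃)ũ] χ' dx; and (ii) for all ψ ∈ V₀, ∫_a^b ũ_t ψ dx + (1/6) ∫_a^b (d/dt P[ũ_x]) ψ' dx = (1/2) ∫_a^b P[ũ²] ψ' dx + ∫_a^b P[η̃] ψ' dx. Then the mass M(t) := ∫_a^b η̃(x,t) dx is constant on [0,T]. -/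

import Mathlib

open MeasureTheory Filter Set

/-- Conservation of mass for the modified (conservative) Galerkin semidiscretisation of
the nondimensional BBM-BBM system with reflective boundary conditions: if `ηh : [0,T] → V`
and `uh : [0,T] → V₀` are continuously differentiable curves satisfying the projected weak
formulation, then `M(t) = ∫_a^b ηh dx` is constant. Here `P`, `P₀` are the `L²(a,b)`
orthogonal projections onto the finite-dimensional subspaces `V ⊆ C¹` (containing the
constants) and `V₀ ⊆ C¹` (whose elements vanish at the endpoints), characterised by
membership together with the orthogonality relations. -/
theorem mass_conservation_conservative_galerkin_reflective
    (a b T : ℝ) (hab : a < b)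
    (V V₀ : Submodule ℝ (ℝ → ℝ))
    (hVfin : FiniteDimensional ℝ V) (hV₀fin : FiniteDimensional ℝ V₀)
    (hVC1 : ∀ f ∈ V, ContDiff ℝ 1 f)
    (hV₀C1 : ∀ f ∈ V₀, ContDiff ℝ 1 f)
    (hVone : (fun _ : ℝ => (1 : ℝ)) ∈ V)
    (hV₀bc : ∀ f ∈ V₀, f a = 0 ∧ f b = 0)
    (P P₀ : (ℝ → ℝ) → (ℝ → ℝ))
    (hPmem : ∀ f : ℝ → ℝ, P f ∈ V) (hP₀mem : ∀ f : ℝ → ℝ, P₀ f ∈ V₀)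
    (hPproj : ∀ f : ℝ → ℝ, ∀ χ ∈ V,
      (∫ x in a..b, P f x * χ x) = ∫ x in a..b, f x * χ x)
    (hP₀proj : ∀ f : ℝ → ℝ, ∀ ψ ∈ V₀,
      (∫ x in a..b, P₀ f x * ψ x) = ∫ x in a..b, f x * ψ x)
    (ηh uh : ℝ → ℝ → ℝ)
    (hηmem : ∀ t : ℝ, ηh t ∈ V) (humem : ∀ t : ℝ, uh t ∈ V₀)
    (hηC1 : ∀ x : ℝ, ContDiff ℝ 1 (fun t => ηh t x))
    (huC1 : ∀ x : ℝ, ContDiff ℝ 1 (fun t => uh t x))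
    (hηxC1 : ∀ x : ℝ, ContDiff ℝ 1 (fun t => P₀ (fun y => deriv (ηh t) y) x))
    (huxC1 : ∀ x : ℝ, ContDiff ℝ 1 (fun t => P (fun y => deriv (uh t) y) x))
    (heq1 : ∀ t ∈ Set.Icc (0 : ℝ) T, ∀ χ ∈ V,
      (∫ x in a..b, deriv (fun s => ηh s x) t * χ x)
          + 1 / 6 * ∫ x in a..b,
              deriv (fun s => P₀ (fun y => deriv (ηh s) y) x) t * deriv χ x
        = ∫ x in a..b, P₀ (fun y => (1 + ηh t y) * uh t y) x * deriv χ x)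
    (heq2 : ∀ t ∈ Set.Icc (0 : ℝ) T, ∀ ψ ∈ V₀,
      (∫ x in a..b, deriv (fun s => uh s x) t * ψ x)
          + 1 / 6 * ∫ x in a..b,
              deriv (fun s => P (fun y => deriv (uh s) y) x) t * deriv ψ x
        = 1 / 2 * (∫ x in a..b, P (fun y => uh t y ^ 2) x * deriv ψ x)
            + ∫ x in a..b, P (ηh t) x * deriv ψ x) :
    ∀ t₁ ∈ Set.Icc (0 : ℝ) T, ∀ t₂ ∈ Set.Icc (0 : ℝ) T,
      (∫ x in a..b, ηh t₁ x) = ∫ x in a..b, ηh t₂ x := by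
    classical
  set ηV : ℝ → V := fun t => ⟨ηh t, hηmem t⟩ with hηVdef
  -- every dual functional applied along the curve is C¹
  have key : ∀ φ : Module.Dual ℝ V, ContDiff ℝ 1 (fun t => φ (ηV t)) := by
    intro φ
    have hspan : φ ∈ Submodule.span ℝ
        (Set.range (fun x : ℝ => (LinearMap.proj x).comp V.subtype)) := by
      apply FiniteDimensional.mem_span_of_iInf_ker_le_ker
      intro v hv
      simp only [Submodule.mem_iInf, LinearMap.mem_ker, LinearMap.comp_apply,
        LinearMap.proj_apply, Submodule.coe_subtype] at hv
      have hv0 : v = 0 := by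
        apply Subtype.ext; funext x; exact hv x
      simp [hv0]
    induction hspan using Submodule.span_induction with
    | mem ψ hψ =>
        obtain ⟨x, rfl⟩ := hψ
        exact hηC1 x
    | zero => simpa using contDiff_const
    | add ψ₁ ψ₂ _ _ h1 h2 => exact h1.add h2
    | smul r ψ _ h => exact h.const_smul r
  let B : Module.Basis (Fin (Module.finrank ℝ V)) ℝ V := Module.finBasis ℝ V
  set c : Fin (Module.finrank ℝ V) → ℝ → ℝ := fun i t => B.repr (ηV t) i with hcdef
  have hc : ∀ i, ContDiff ℝ 1 (c i) := fun i => by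
    have := key (B.coord i)
    simpa [Module.Basis.coord_apply, hcdef] using this
  have hcd : ∀ i t, HasDerivAt (c i) (deriv (c i) t) t := fun i t =>
    (((hc i).differentiable one_ne_zero) t).hasDerivAt
  have hrep : ∀ t x, ηh t x = ∑ i, c i t * ((B i : ℝ → ℝ) x) := by
    intro t x
    have h0 := B.sum_repr (ηV t)
    have h2 := congrFun (congrArg Subtype.val h0) x
    simp only [AddSubmonoidClass.coe_finset_sum, SetLike.val_smul, Finset.sum_apply,
      Pi.smul_apply, smul_eq_mul] at h2
    exact h2.symm
  have hInt : ∀ i, IntervalIntegrable (B i : ℝ → ℝ) volume a b := fun i =>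
    ((hVC1 _ (B i).2).continuous).intervalIntegrable a b
  set K : Fin (Module.finrank ℝ V) → ℝ := fun i => ∫ x in a..b, (B i : ℝ → ℝ) x with hKdef
  have hM : ∀ t, (∫ x in a..b, ηh t x) = ∑ i, c i t * K i := by
    intro t
    have : (fun x => ηh t x) = fun x => ∑ i, c i t * (B i : ℝ → ℝ) x := funext (hrep t)
    rw [this, intervalIntegral.integral_finset_sum
      (fun i _ => (hInt i).const_mul _)]
    simp_rw [intervalIntegral.integral_const_mul]
    rfl
  have hder : ∀ t x, HasDerivAt (fun s => ηh s x)
      (∑ i, deriv (c i) t * (B i : ℝ → ℝ) x) t := by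
    intro t x
    have h0 : (fun s => ηh s x) = fun s => ∑ i, c i s * (B i : ℝ → ℝ) x :=
      funext fun s => hrep s x
    rw [h0]
    exact HasDerivAt.fun_sum (fun i _ => (hcd i t).mul_const _)
  have hzero : ∀ t ∈ Set.Icc (0 : ℝ) T, (∑ i, deriv (c i) t * K i) = 0 := by
    intro t ht
    have h1 := heq1 t ht (fun _ => (1 : ℝ)) hVone
    simp only [deriv_const', mul_zero, mul_one, intervalIntegral.integral_zero,
      add_zero] at h1
    have h2 : (fun x => deriv (fun s => ηh s x) t)
        = fun x => ∑ i, deriv (c i) t * (B i : ℝ → ℝ) x :=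
      funext fun x => (hder t x).deriv
    rw [h2, intervalIntegral.integral_finset_sum (fun i _ => (hInt i).const_mul _)] at h1
    simp_rw [intervalIntegral.integral_const_mul] at h1
    exact h1
  set M : ℝ → ℝ := fun t => ∑ i, c i t * K i with hMdef
  have hMd : ∀ t, HasDerivAt M (∑ i, deriv (c i) t * K i) t := fun t =>
    HasDerivAt.fun_sum (fun i _ => (hcd i t).mul_const _)
  have hconst : ∀ s ∈ Set.Icc (0 : ℝ) T, ∀ r ∈ Set.Icc (0 : ℝ) T, s ≤ r → M r = M s := by
    intro s hs r hr hsr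
    have hcont : ContinuousOn M (Set.Icc s r) := by
      apply Continuous.continuousOn
      exact continuous_finset_sum _ (fun i _ => ((hc i).continuous).mul continuous_const)
    refine constant_of_has_deriv_right_zero hcont (fun y hy => ?_) r (right_mem_Icc.mpr hsr)
    have hyIcc : y ∈ Set.Icc (0 : ℝ) T := ⟨hs.1.trans hy.1, hy.2.le.trans hr.2⟩
    have := hMd y
    rw [hzero y hyIcc] at this
    exact this.hasDerivWithinAt
  intro t₁ ht₁ t₂ ht₂
  rw [hM, hM]
  rcases le_total t₁ t₂ with h | h
  · exact (hconst t₁ ht₁ t₂ ht₂ h).symm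
  · exact hconst t₂ ht₂ t₁ ht₁ h
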